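/- Let r : [0,∞) → [0,∞) be continuous, strictly increasing, strictly concave with r(0) = 0 and r(p) → ∞ as p → ∞, so that φ = r⁻¹ : [0,∞) → [0,∞) is continuous, strictly increasing and strictly convex. Let a < b and let B₁, B₂ : [a,b] → ℝ be piecewise continuously differentiable, nondecreasing functions with B₁ convex, B₁(a) = B₂(a), B₁(b) = B₂(b), and B₁(t) > B₂(t) for all t ∈ (a,b). Then ∫ₐᵇ φ(B₁'(t)) dt < ∫ₐᵇ φ(B₂'(t)) dt; i.e., the convex dominating curve transmits the same total data with strictly less energy. -/

import Mathlib

open MeasureTheory Set Filter intervalIntegral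

open Topology

noncomputable section

/-- `φ` is the inverse of the rate function `r` on `[0,∞)`. -/
def IsInverseOn (φ r : ℝ → ℝ) : Prop :=
  (∀ p : ℝ, 0 ≤ p → φ (r p) = p) ∧ (∀ y : ℝ, 0 ≤ y → r (φ y) = y) ∧
    (∀ y : ℝ, 0 ≤ y → 0 ≤ φ y)

/-- `f` is piecewise continuously differentiable on `[a,b]` with derivative `f'`:
`f` is continuous, differentiable with derivative `f'` off a finite set, and `f'`
is piecewise continuous and bounded. -/
def PiecewiseC1On (a b : ℝ) (f f' : ℝ → ℝ) : Prop :=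
  ContinuousOn f (Set.Icc a b) ∧
  (∃ s : Finset ℝ, (∀ t ∈ Set.Ioo a b, t ∉ s → HasDerivAt f (f' t) t) ∧
    ContinuousOn f' (Set.Icc a b \ (s : Set ℝ))) ∧
  (∃ M : ℝ, ∀ t ∈ Set.Icc a b, |f' t| ≤ M)


/-- FTC-2 allowing a finite exceptional set for the derivative. -/
theorem ftc_finite (E : Finset ℝ) :
    ∀ (u v : ℝ) (f f' : ℝ → ℝ), u ≤ v → ContinuousOn f (Icc u v) →
      (∀ t ∈ Ioo u v, t ∉ E → HasDerivAt f (f' t) t) →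
      IntervalIntegrable f' volume u v →
      ∫ t in u..v, f' t = f v - f u := by
  induction E using Finset.induction with
  | empty =>
    intro u v f f' huv hcont hderiv hint
    exact integral_eq_sub_of_hasDerivAt_of_le huv hcont
      (fun t ht => hderiv t ht (by simp)) hint
  | @insert x s hx IH =>
    intro u v f f' huv hcont hderiv hint
    by_cases hmem : x ∈ Ioo u v
    · have h1 : ∫ t in u..x, f' t = f x - f u := by
        refine IH u x f f' hmem.1.le (hcont.mono (Icc_subset_Icc le_rfl hmem.2.le)) ?_ ?_
        · intro t ht hts
          refine hderiv t ⟨ht.1, ht.2.trans hmem.2⟩ ?_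
          simp only [Finset.mem_insert, not_or]
          exact ⟨ne_of_lt ht.2, hts⟩
        · exact hint.mono_set (by
            rw [uIcc_of_le huv, uIcc_of_le hmem.1.le]
            exact Icc_subset_Icc le_rfl hmem.2.le)
      have h2 : ∫ t in x..v, f' t = f v - f x := by
        refine IH x v f f' hmem.2.le (hcont.mono (Icc_subset_Icc hmem.1.le le_rfl)) ?_ ?_
        · intro t ht hts
          refine hderiv t ⟨hmem.1.trans ht.1, ht.2⟩ ?_
          simp only [Finset.mem_insert, not_or]
          exact ⟨(ne_of_gt ht.1), hts⟩
        · exact hint.mono_set (by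
            rw [uIcc_of_le huv, uIcc_of_le hmem.2.le]
            exact Icc_subset_Icc hmem.1.le le_rfl)
      have i1 : IntervalIntegrable f' volume u x := hint.mono_set (by
          rw [uIcc_of_le huv, uIcc_of_le hmem.1.le]
          exact Icc_subset_Icc le_rfl hmem.2.le)
      have i2 : IntervalIntegrable f' volume x v := hint.mono_set (by
          rw [uIcc_of_le huv, uIcc_of_le hmem.2.le]
          exact Icc_subset_Icc hmem.1.le le_rfl)
      have := intervalIntegral.integral_add_adjacent_intervals i1 i2
      rw [← this, h1, h2]; ring
    · refine IH u v f f' huv hcont ?_ hint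
      intro t ht hts
      refine hderiv t ht ?_
      simp only [Finset.mem_insert, not_or]
      exact ⟨fun h => hmem (h ▸ ht), hts⟩


noncomputable def subslope (φ : ℝ → ℝ) (x : ℝ) : ℝ :=
  sInf ((fun z => (φ z - φ x) / (z - x)) '' Ioi x)

section subslope
variable {φ : ℝ → ℝ} (hφm : MonotoneOn φ (Ici 0)) (hφc : ConvexOn ℝ (Ici 0) φ)

include hφm in
theorem subslope_slope_nonneg {x z : ℝ} (hx : 0 ≤ x) (hz : x < z) :
    0 ≤ (φ z - φ x) / (z - x) :=
  div_nonneg (sub_nonneg.2 (hφm hx (hx.trans hz.le) hz.le)) (sub_nonneg.2 hz.le)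

include hφm in
theorem subslope_bddBelow {x : ℝ} (hx : 0 ≤ x) :
    BddBelow ((fun z => (φ z - φ x) / (z - x)) '' Ioi x) := by
  refine ⟨0, ?_⟩
  rintro y ⟨z, hz, rfl⟩
  exact subslope_slope_nonneg hφm hx hz

theorem subslope_im_nonempty (x : ℝ) :
    ((fun z => (φ z - φ x) / (z - x)) '' Ioi x).Nonempty :=
  ⟨_, ⟨x + 1, by simp, rfl⟩⟩

include hφm in
theorem subslope_le {x z : ℝ} (hx : 0 ≤ x) (hz : x < z) :
    subslope φ x ≤ (φ z - φ x) / (z - x) :=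
  csInf_le (subslope_bddBelow hφm hx) ⟨z, hz, rfl⟩

include hφm in
theorem subslope_nonneg {x : ℝ} (hx : 0 ≤ x) : 0 ≤ subslope φ x := by
  refine le_csInf (subslope_im_nonempty x) ?_
  rintro y ⟨z, hz, rfl⟩
  exact subslope_slope_nonneg hφm hx hz

include hφm hφc in
theorem subslope_mono {x x' : ℝ} (hx : 0 ≤ x) (hxx : x ≤ x') :
    subslope φ x ≤ subslope φ x' := by
  rcases eq_or_lt_of_le hxx with rfl | hlt
  · exact le_rfl
  refine le_csInf (subslope_im_nonempty x') ?_
  rintro y ⟨z, hz, rfl⟩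
  calc subslope φ x ≤ (φ x' - φ x) / (x' - x) := subslope_le hφm hx hlt
    _ ≤ (φ z - φ x') / (z - x') :=
        hφc.slope_mono_adjacent hx (hx.trans (hxx.trans (le_of_lt hz))) hlt hz

omit hφm in
theorem subslope_support {φ : ℝ → ℝ} (hφm : MonotoneOn φ (Ici 0))
    (hφsc : StrictConvexOn ℝ (Ici 0) φ) {x y : ℝ} (hx : 0 ≤ x) (hy : 0 ≤ y) (hne : y ≠ x) :
    φ x + subslope φ x * (y - x) < φ y := by
  rcases lt_or_gt_of_ne hne with hlt | hgt
  · -- y < x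
    set m := (x + y) / 2 with hm
    have hym : y < m := by simp only [hm]; linarith
    have hmx : m < x := by simp only [hm]; linarith
    have hm0 : 0 ≤ m := hy.trans hym.le
    have h1 : (φ y - φ x) / (y - x) < (φ m - φ x) / (m - x) :=
      hφsc.secant_strict_mono hx hy hm0 (ne_of_lt hlt) (ne_of_lt hmx) hym
    have h2 : (φ m - φ x) / (m - x) ≤ subslope φ x := by
      refine le_csInf (subslope_im_nonempty x) ?_
      rintro w ⟨z, hz, rfl⟩
      exact hφsc.convexOn.secant_mono hx hm0 (hx.trans hz.le) (ne_of_lt hmx)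
        (ne_of_gt hz) (hmx.le.trans hz.le)
    have h3 : (φ y - φ x) / (y - x) < subslope φ x := h1.trans_le h2
    have hyx : y - x < 0 := by linarith
    nlinarith [mul_lt_mul_of_neg_right h3 hyx, div_mul_cancel₀ (φ y - φ x) (ne_of_lt hyx)]
  · -- x < y
    set m := (x + y) / 2 with hm
    have hxm : x < m := by simp only [hm]; linarith
    have hmy : m < y := by simp only [hm]; linarith
    have hm0 : 0 ≤ m := hx.trans hxm.le
    have h1 : subslope φ x ≤ (φ m - φ x) / (m - x) := subslope_le hφm hx hxm
    have h2 : (φ m - φ x) / (m - x) < (φ y - φ x) / (y - x) :=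
      hφsc.secant_strict_mono hx hm0 hy (ne_of_gt hxm) (ne_of_gt hgt) hmy
    have h3 : subslope φ x < (φ y - φ x) / (y - x) := h1.trans_lt h2
    have hyx : 0 < y - x := by linarith
    nlinarith [mul_lt_mul_of_pos_right h3 hyx, div_mul_cancel₀ (φ y - φ x) (ne_of_gt hyx)]

end subslope


noncomputable def rslope (f : ℝ → ℝ) (b t : ℝ) : ℝ :=
  sInf ((fun z => (f z - f t) / (z - t)) '' Ioc t b)

section rslope
variable {f : ℝ → ℝ} {a b : ℝ}
variable (hm : MonotoneOn f (Icc a b)) (hc : ConvexOn ℝ (Icc a b) f)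

include hm in
theorem rslope_slope_nonneg {t z : ℝ} (ht : t ∈ Ico a b) (hz : z ∈ Ioc t b) :
    0 ≤ (f z - f t) / (z - t) :=
  div_nonneg (sub_nonneg.2 (hm ⟨ht.1, ht.2.le⟩ ⟨ht.1.trans hz.1.le, hz.2⟩ hz.1.le))
    (sub_nonneg.2 hz.1.le)

theorem rslope_im_nonempty (ht : t ∈ Ico a b) :
    ((fun z => (f z - f t) / (z - t)) '' Ioc t b).Nonempty :=
  ⟨_, ⟨b, ⟨ht.2, le_rfl⟩, rfl⟩⟩

include hm in
theorem rslope_bddBelow (ht : t ∈ Ico a b) :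
    BddBelow ((fun z => (f z - f t) / (z - t)) '' Ioc t b) := by
  refine ⟨0, ?_⟩
  rintro y ⟨z, hz, rfl⟩
  exact rslope_slope_nonneg hm ht hz

include hm in
theorem rslope_nonneg (ht : t ∈ Ico a b) : 0 ≤ rslope f b t := by
  refine le_csInf (rslope_im_nonempty ht) ?_
  rintro y ⟨z, hz, rfl⟩
  exact rslope_slope_nonneg hm ht hz

include hm in
theorem rslope_le (ht : t ∈ Ico a b) {z : ℝ} (hz : z ∈ Ioc t b) :
    rslope f b t ≤ (f z - f t) / (z - t) :=
  csInf_le (rslope_bddBelow hm ht) ⟨z, hz, rfl⟩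

include hm hc in
theorem rslope_monotoneOn : MonotoneOn (rslope f b) (Ico a b) := by
  intro t ht t' ht' htt
  rcases eq_or_lt_of_le htt with rfl | hlt
  · exact le_rfl
  refine le_csInf (rslope_im_nonempty ht') ?_
  rintro y ⟨z, hz, rfl⟩
  have hz' : z ∈ Ioc t b := ⟨hlt.trans hz.1, hz.2⟩
  calc rslope f b t ≤ (f z - f t) / (z - t) := rslope_le hm ht hz'
    _ ≤ (f z - f t') / (z - t') := by
        have := hc.secant_mono (a := z) ⟨ht.1.trans hz'.1.le, hz.2⟩ ⟨ht.1, ht.2.le⟩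
          ⟨ht.1.trans htt, ht'.2.le⟩ (ne_of_lt hz'.1) (ne_of_lt hz.1) htt
        calc (f z - f t) / (z - t) = (f t - f z) / (t - z) := by rw [← neg_div_neg_eq]; ring_nf
          _ ≤ (f t' - f z) / (t' - z) := this
          _ = (f z - f t') / (z - t') := by rw [← neg_div_neg_eq]; ring_nf

include hm hc in
theorem rslope_eq_deriv {t d : ℝ} (ht : t ∈ Ioo a b) (hd : HasDerivAt f d t) :
    rslope f b t = d := by
  have htico : t ∈ Ico a b := ⟨ht.1.le, ht.2⟩
  have hslope : Tendsto (fun z => (f z - f t) / (z - t)) (𝓝[>] t) (𝓝 d) := by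
    have := hasDerivAt_iff_tendsto_slope.1 hd
    exact (this.mono_left (nhdsWithin_mono _ (fun z hz => ne_of_gt hz))).congr
      (fun z => slope_def_field f t z)
  refine le_antisymm ?_ ?_
  · -- rslope ≤ d : rslope ≤ slope z for z near t from the right, pass to limit
    refine ge_of_tendsto hslope ?_
    filter_upwards [Ioo_mem_nhdsGT_of_mem ⟨le_refl t, ht.2⟩] with z hz
    exact rslope_le hm htico ⟨hz.1, hz.2.le⟩
  · -- d ≤ rslope : d ≤ slope(t,z) for each z ∈ Ioc t b
    refine le_csInf (rslope_im_nonempty htico) ?_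
    rintro y ⟨z, hz, rfl⟩
    refine le_of_tendsto hslope ?_
    filter_upwards [Ioo_mem_nhdsGT_of_mem ⟨le_refl t, hz.1⟩] with w hw
    exact hc.secant_mono (a := t) ⟨ht.1.le, ht.2.le⟩
      ⟨ht.1.le.trans hw.1.le, (hw.2.le.trans hz.2)⟩ ⟨ht.1.le.trans hz.1.le, hz.2⟩
      (ne_of_gt hw.1) (ne_of_gt hz.1) hw.2.le

end rslope

/-- derivative of a monotone function at an interior point is nonneg -/
theorem deriv_nonneg_of_monotoneOn {f : ℝ → ℝ} {a b t d : ℝ}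
    (hm : MonotoneOn f (Icc a b)) (ht : t ∈ Ioo a b) (hd : HasDerivAt f d t) : 0 ≤ d := by
  have hslope : Tendsto (fun z => (f z - f t) / (z - t)) (𝓝[>] t) (𝓝 d) := by
    have := hasDerivAt_iff_tendsto_slope.1 hd
    exact (this.mono_left (nhdsWithin_mono _ (fun z hz => ne_of_gt hz))).congr
      (fun z => slope_def_field f t z)
  refine ge_of_tendsto hslope ?_
  filter_upwards [Ioo_mem_nhdsGT_of_mem ⟨le_refl t, ht.2⟩] with z hz
  exact div_nonneg (sub_nonneg.2 (hm ⟨ht.1.le, ht.2.le⟩ ⟨ht.1.le.trans hz.1.le, hz.2.le⟩ hz.1.le))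
    (sub_nonneg.2 hz.1.le)


/-- If `h` is a nonnegative bounded monotone weight on `(a,b)` and `D'` integrates to
`D b - D c ≥ 0` on every `[c,b]`, then `∫ h D' ≥ 0`. -/
theorem weight_integral_nonneg (a b : ℝ) (hab : a < b) (h D' D : ℝ → ℝ) (K M : ℝ)
    (hK : 0 < K) (hM : 0 ≤ M)
    (hmono : MonotoneOn h (Ioo a b))
    (hrange : ∀ t ∈ Ioo a b, h t ∈ Icc 0 K)
    (hD'bnd : ∀ t ∈ Icc a b, |D' t| ≤ M)
    (hID : Integrable D' (volume.restrict (Ioo a b)))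
    (hIhD : Integrable (fun t => h t * D' t) (volume.restrict (Ioo a b)))
    (hftc : ∀ c ∈ Icc a b, ∫ t in c..b, D' t = D b - D c)
    (hD0 : ∀ c ∈ Icc a b, D c ≤ 0) (hDb : D b = 0) :
    0 ≤ ∫ t, h t * D' t ∂(volume.restrict (Ioo a b)) := by
  classical
  set ν := volume.restrict (Ioo a b) with hν
  haveI : IsFiniteMeasure ν := by
    constructor
    rw [hν, Measure.restrict_apply_univ]
    exact measure_Ioo_lt_top
  set I := ∫ t, h t * D' t ∂ν with hI
  -- key: for every positive n, I ≥ -(K*2*M*(b-a))/n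
  have key : ∀ n : ℕ, 0 < n → -(K * (2 * M) * (b - a) / n) ≤ I := by
    intro n hn
    have hn0 : (0:ℝ) < n := Nat.cast_pos.2 hn
    set A : ℕ → Set ℝ := fun i => {u | u ∈ Ioo a b ∧ (i : ℝ) * K / n < h u} with hA
    set c : ℕ → ℝ := fun i => if hAi : (A i).Nonempty then sInf (A i) else b with hc
    have hAbdd : ∀ i, BddBelow (A i) := fun i => ⟨a, fun u hu => hu.1.1.le⟩
    have hcmem : ∀ i, c i ∈ Icc a b := by
      intro i
      simp only [hc]
      split_ifs with hAi
      · exact ⟨le_csInf hAi (fun u hu => hu.1.1.le),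
          (csInf_le (hAbdd i) hAi.some_mem).trans hAi.some_mem.1.2.le⟩
      · exact ⟨hab.le, le_rfl⟩
    have hcsub : ∀ i, Ioo (c i) b ⊆ A i := by
      intro i t ht
      simp only [hc] at ht
      by_cases hAi : (A i).Nonempty
      · rw [dif_pos hAi] at ht
        obtain ⟨u, hu, hut⟩ := (csInf_lt_iff (hAbdd i) hAi).1 ht.1
        have htIoo : t ∈ Ioo a b := ⟨hu.1.1.trans hut, ht.2⟩
        exact ⟨htIoo, hu.2.trans_le (hmono hu.1 htIoo hut.le)⟩
      · rw [dif_neg hAi] at ht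
        exact absurd (ht.1.trans ht.2) (lt_irrefl b)
    have hcsup : ∀ i t, t ∈ A i → t ≠ c i → t ∈ Ioo (c i) b := by
      intro i t ht hne
      have hnon : (A i).Nonempty := ⟨t, ht⟩
      simp only [hc, dif_pos hnon] at hne ⊢
      exact ⟨lt_of_le_of_ne (csInf_le (hAbdd i) ht) (Ne.symm hne), ht.1.2⟩
    -- the step function
    set g : ℝ → ℝ := fun t =>
      K / n * ∑ i ∈ Finset.range n, (Ioo (c i) b).indicator (fun _ => (1:ℝ)) t with hg
    have hgbdd : ∀ t, 0 ≤ g t ∧ g t ≤ K := by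
      intro t
      have h1 : ∀ i ∈ Finset.range n, (0:ℝ) ≤ (Ioo (c i) b).indicator (fun _ => (1:ℝ)) t :=
        fun i _ => Set.indicator_nonneg (fun _ _ => zero_le_one) t
      have h2 : ∀ i ∈ Finset.range n, (Ioo (c i) b).indicator (fun _ => (1:ℝ)) t ≤ 1 :=
        fun i _ => Set.indicator_le_self' (fun _ _ => zero_le_one) t |>.trans (by
          by_cases hmem : t ∈ Ioo (c i) b <;> simp [Set.indicator_of_mem, hmem])
      have hsum0 : (0:ℝ) ≤ ∑ i ∈ Finset.range n, (Ioo (c i) b).indicator (fun _ => (1:ℝ)) t :=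
        Finset.sum_nonneg h1
      have hsumn : (∑ i ∈ Finset.range n, (Ioo (c i) b).indicator (fun _ => (1:ℝ)) t) ≤ n := by
        calc (∑ i ∈ Finset.range n, (Ioo (c i) b).indicator (fun _ => (1:ℝ)) t)
            ≤ ∑ i ∈ Finset.range n, (1:ℝ) := Finset.sum_le_sum h2
          _ = n := by simp
      constructor
      · exact mul_nonneg (div_nonneg hK.le hn0.le) hsum0
      · calc K / n * ∑ i ∈ Finset.range n, (Ioo (c i) b).indicator (fun _ => (1:ℝ)) t
            ≤ K / n * n := by
              exact mul_le_mul_of_nonneg_left hsumn (div_nonneg hK.le hn0.le)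
          _ = K := by field_simp
    have hgmeas : Measurable g := by
      exact measurable_const.mul (Finset.measurable_sum _
        (fun i _ => (measurable_const.indicator measurableSet_Ioo)))
    have hIg : Integrable (fun t => g t * D' t) ν :=
      hID.bdd_mul hgmeas.aestronglyMeasurable
        (c := K) (Eventually.of_forall fun t => by rw [Real.norm_eq_abs, abs_of_nonneg (hgbdd t).1]; exact (hgbdd t).2)
    -- the integral of the step function against D' is nonneg
    have hterm : ∀ i ∈ Finset.range n,
        ∫ t, (Ioo (c i) b).indicator D' t ∂ν = D b - D (c i) := by
      intro i _
      have hsub : Ioo (c i) b ⊆ Ioo a b :=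
        fun t ht => ⟨lt_of_le_of_lt (hcmem i).1 ht.1, ht.2⟩
      rw [MeasureTheory.integral_indicator measurableSet_Ioo, hν,
        Measure.restrict_restrict measurableSet_Ioo, Set.inter_eq_left.2 hsub,
        ← MeasureTheory.integral_Ioc_eq_integral_Ioo,
        ← intervalIntegral.integral_of_le (hcmem i).2]
      exact hftc (c i) (hcmem i)
    have hgD : ∫ t, g t * D' t ∂ν
        = K / n * ∑ i ∈ Finset.range n, (D b - D (c i)) := by
      have hpt : ∀ t, g t * D' t
          = K / n * ∑ i ∈ Finset.range n, (Ioo (c i) b).indicator D' t := by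
        intro t
        rw [hg]
        simp only [mul_assoc, Finset.sum_mul]
        congr 1
        refine Finset.sum_congr rfl (fun i _ => ?_)
        by_cases hmem : t ∈ Ioo (c i) b
        · simp [Set.indicator_of_mem hmem]
        · simp [Set.indicator_of_notMem hmem]
      calc ∫ t, g t * D' t ∂ν
          = ∫ t, K / n * ∑ i ∈ Finset.range n, (Ioo (c i) b).indicator D' t ∂ν := by
            exact integral_congr_ae (Eventually.of_forall hpt)
        _ = K / n * ∫ t, ∑ i ∈ Finset.range n, (Ioo (c i) b).indicator D' t ∂ν :=
            integral_const_mul _ _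
        _ = K / n * ∑ i ∈ Finset.range n, ∫ t, (Ioo (c i) b).indicator D' t ∂ν := by
            rw [integral_finset_sum _ (fun i _ => hID.indicator measurableSet_Ioo)]
        _ = K / n * ∑ i ∈ Finset.range n, (D b - D (c i)) := by
            rw [Finset.sum_congr rfl hterm]
    have hgDpos : 0 ≤ ∫ t, g t * D' t ∂ν := by
      rw [hgD]
      refine mul_nonneg (div_nonneg hK.le hn0.le) (Finset.sum_nonneg (fun i _ => ?_))
      have := hD0 (c i) (hcmem i)
      linarith [hDb]
    -- a.e. comparison of g with h
    have hN : ν (⋃ i ∈ Finset.range n, {c i}) = 0 := by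
      refine le_antisymm (le_trans (Measure.restrict_apply_le _ _) (le_of_eq ?_)) zero_le
      exact measure_biUnion_null_iff (Finset.range n).countable_toSet |>.2
        (fun i _ => measure_singleton _)
    have hgae : ∀ᵐ t ∂ν, h t ≤ g t ∧ g t ≤ h t + K / n := by
      filter_upwards [ae_restrict_mem measurableSet_Ioo,
        measure_eq_zero_iff_ae_notMem.1 hN] with t htIoo htN
      have htind : ∀ i ∈ Finset.range n,
          (Ioo (c i) b).indicator (fun _ => (1:ℝ)) t
            = if (i:ℝ) * K / n < h t then 1 else 0 := by
        intro i hi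
        have htne : t ≠ c i := by
          intro hEq
          exact htN (Set.mem_biUnion hi (by simp [hEq]))
        by_cases hti : t ∈ A i
        · rw [Set.indicator_of_mem (hcsup i t hti htne), if_pos hti.2]
        · have h1 : t ∉ Ioo (c i) b := fun hmem => hti (hcsub i hmem)
          rw [Set.indicator_of_notMem h1, if_neg (fun hlt => hti ⟨htIoo, hlt⟩)]
      set x : ℝ := h t * n / K with hx
      have hx0 : 0 ≤ x := by
        have := (hrange t htIoo).1
        positivity
      have hxn : x ≤ n := by
        rw [hx, div_le_iff₀ hK]
        have := (hrange t htIoo).2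
        nlinarith
      have hice : ⌈x⌉₊ ≤ n := Nat.ceil_le.2 (by exact_mod_cast hxn)
      have hfeq : Finset.filter (fun i : ℕ => (i:ℝ) * K / ↑n < h t) (Finset.range n)
          = Finset.range ⌈x⌉₊ := by
        ext i
        simp only [Finset.mem_filter, Finset.mem_range]
        constructor
        · rintro ⟨hin, hlt⟩
          rw [Nat.lt_ceil, hx, lt_div_iff₀ hK]
          rw [div_lt_iff₀ hn0] at hlt
          nlinarith
        · intro hi
          refine ⟨lt_of_lt_of_le hi hice, ?_⟩
          have h5 := Nat.lt_ceil.1 hi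
          rw [hx, lt_div_iff₀ hK] at h5
          rw [div_lt_iff₀ hn0]
          nlinarith
      have hcard : g t = K / n * (⌈x⌉₊ : ℝ) := by
        rw [hg]
        simp only
        rw [Finset.sum_congr rfl htind, Finset.sum_boole, hfeq, Finset.card_range]
      have h2 : K / n * x = h t := by
        rw [hx]
        field_simp
      constructor
      · rw [hcard]
        have h1 : x ≤ (⌈x⌉₊ : ℝ) := Nat.le_ceil x
        have h3 := mul_le_mul_of_nonneg_left h1 (div_nonneg hK.le hn0.le)
        linarith
      · rw [hcard]
        have h1 : (⌈x⌉₊ : ℝ) < x + 1 := Nat.ceil_lt_add_one hx0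
        have h3 := mul_le_mul_of_nonneg_left h1.le (div_nonneg hK.le hn0.le)
        have h4 : K / n * (x + 1) = h t + K / n := by rw [mul_add, h2, mul_one]
        linarith
    -- error bound
    have herr : ‖∫ t, (h t * D' t - g t * D' t) ∂ν‖ ≤ K * (2 * M) * (b - a) / n := by
      have hbnd : ∀ᵐ t ∂ν, ‖h t * D' t - g t * D' t‖ ≤ K / n * (2 * M) := by
        filter_upwards [hgae, ae_restrict_mem measurableSet_Ioo] with t hgt htIoo
        have hD'b : |D' t| ≤ M := hD'bnd t ⟨htIoo.1.le, htIoo.2.le⟩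
        have : |h t - g t| ≤ K / n := abs_le.2 ⟨by linarith [hgt.1, hgt.2], by
          linarith [hgt.1, hgt.2]⟩
        calc ‖h t * D' t - g t * D' t‖ = |h t - g t| * |D' t| := by
              rw [Real.norm_eq_abs, ← abs_mul]; ring_nf
          _ ≤ K / n * M := by
              exact mul_le_mul this hD'b (abs_nonneg _) (div_nonneg hK.le hn0.le)
          _ ≤ K / n * (2 * M) := by nlinarith [div_nonneg hK.le hn0.le]
      calc ‖∫ t, (h t * D' t - g t * D' t) ∂ν‖
          ≤ ∫ t, K / n * (2 * M) ∂ν := by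
            refine norm_integral_le_of_norm_le (integrable_const _) hbnd
        _ = (ν Set.univ).toReal * (K / n * (2 * M)) := by
            rw [MeasureTheory.integral_const]; simp [smul_eq_mul, measureReal_def]
        _ = K * (2 * M) * (b - a) / n := by
            rw [hν, Measure.restrict_apply_univ, Real.volume_Ioo,
              ENNReal.toReal_ofReal (by linarith)]
            ring
    have hsplit : ∫ t, (h t * D' t - g t * D' t) ∂ν
        = I - ∫ t, g t * D' t ∂ν := integral_sub hIhD hIg
    have herr' : |∫ t, (h t * D' t - g t * D' t) ∂ν| ≤ K * (2 * M) * (b - a) / n := by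
      rw [← Real.norm_eq_abs]
      exact herr
    have habs := abs_le.1 herr'
    linarith [hgDpos, habs.1, hsplit.le, hsplit.ge]
  -- conclude
  by_contra hneg
  push_neg at hneg
  obtain ⟨n, hnlt⟩ := exists_nat_gt (K * (2 * M) * (b - a) / (-I))
  have hIpos : 0 < -I := neg_pos.2 hneg
  have hc0 : 0 ≤ K * (2 * M) * (b - a) := by
    have : (0:ℝ) ≤ b - a := by linarith
    have h2 : (0:ℝ) ≤ 2 * M := by linarith
    exact mul_nonneg (mul_nonneg hK.le h2) this
  have hn0 : 0 < n := by
    by_contra hn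
    push_neg at hn
    interval_cases n
    simp only [Nat.cast_zero] at hnlt
    exact absurd hnlt (not_lt.2 (div_nonneg hc0 hIpos.le))
  have := key n hn0
  rw [div_lt_iff₀ hIpos] at hnlt
  have : K * (2 * M) * (b - a) / n < -I := by
    rw [div_lt_iff₀ (Nat.cast_pos.2 hn0)]
    linarith [hnlt]
  linarith [key n hn0]


set_option maxHeartbeats 1000000 in
/-- Lemma A.2 (energy-comparison lemma): if `B₁` is convex, strictly above `B₂`
on `(a,b)` with the same endpoints, then `B₁` uses strictly less energy. -/
theorem convex_dominating_curve_strictly_less_energy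
    (r φ : ℝ → ℝ)
    (hr_cont : ContinuousOn r (Set.Ici 0))
    (hr_mono : StrictMonoOn r (Set.Ici 0))
    (hr_concave : StrictConcaveOn ℝ (Set.Ici 0) r)
    (hr_zero : r 0 = 0)
    (hr_top : Filter.Tendsto r Filter.atTop Filter.atTop)
    (hφ : IsInverseOn φ r)
    (hφ_cont : ContinuousOn φ (Set.Ici 0))
    (hφ_mono : StrictMonoOn φ (Set.Ici 0))
    (hφ_convex : StrictConvexOn ℝ (Set.Ici 0) φ)
    (a b : ℝ) (hab : a < b)
    (B₁ B₁' B₂ B₂' : ℝ → ℝ)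
    (hB₁_pc1 : PiecewiseC1On a b B₁ B₁') (hB₂_pc1 : PiecewiseC1On a b B₂ B₂')
    (hB₁_mono : MonotoneOn B₁ (Set.Icc a b)) (hB₂_mono : MonotoneOn B₂ (Set.Icc a b))
    (hB₁_convex : ConvexOn ℝ (Set.Icc a b) B₁)
    (h_start : B₁ a = B₂ a) (h_end : B₁ b = B₂ b)
    (h_gt : ∀ t ∈ Set.Ioo a b, B₂ t < B₁ t) :
    (∫ t in a..b, φ (B₁' t)) < ∫ t in a..b, φ (B₂' t) := by
  classical
  obtain ⟨hφ1, hφ2, hφ3⟩ := hφ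
  obtain ⟨hB₁c, ⟨s₁, hd₁, hc₁⟩, ⟨M₁, hM₁⟩⟩ := hB₁_pc1
  obtain ⟨hB₂c, ⟨s₂, hd₂, hc₂⟩, ⟨M₂, hM₂⟩⟩ := hB₂_pc1
  set E : Finset ℝ := s₁ ∪ s₂ with hE
  have hφm : MonotoneOn φ (Ici 0) := hφ_mono.monotoneOn
  have hφc : ConvexOn ℝ (Ici 0) φ := hφ_convex.convexOn
  have hφ0 : φ 0 = 0 := by
    have := hφ1 0 le_rfl
    rwa [hr_zero] at this
  set ν := volume.restrict (Ioo a b) with hν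
  haveI hfin : IsFiniteMeasure ν := by
    constructor
    rw [hν, Measure.restrict_apply_univ]
    exact measure_Ioo_lt_top
  -- derivatives at good points
  have hgood₁ : ∀ t, t ∈ Ioo a b → t ∉ (E : Set ℝ) → HasDerivAt B₁ (B₁' t) t := by
    intro t ht htE
    refine hd₁ t ht (fun hs => htE ?_)
    simp only [hE, Finset.coe_union, Set.mem_union]
    exact Or.inl hs
  have hgood₂ : ∀ t, t ∈ Ioo a b → t ∉ (E : Set ℝ) → HasDerivAt B₂ (B₂' t) t := by
    intro t ht htE
    refine hd₂ t ht (fun hs => htE ?_)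
    simp only [hE, Finset.coe_union, Set.mem_union]
    exact Or.inr hs
  have hx0 : ∀ t, t ∈ Ioo a b → t ∉ (E : Set ℝ) → 0 ≤ B₁' t :=
    fun t ht htE => deriv_nonneg_of_monotoneOn hB₁_mono ht (hgood₁ t ht htE)
  have hy0 : ∀ t, t ∈ Ioo a b → t ∉ (E : Set ℝ) → 0 ≤ B₂' t :=
    fun t ht htE => deriv_nonneg_of_monotoneOn hB₂_mono ht (hgood₂ t ht htE)
  have hσ : ∀ t, t ∈ Ioo a b → t ∉ (E : Set ℝ) → rslope B₁ b t = B₁' t :=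
    fun t ht htE => rslope_eq_deriv hB₁_mono hB₁_convex ht (hgood₁ t ht htE)
  -- uniform bounds
  set M : ℝ := max M₁ M₂ with hM
  have haIcc : a ∈ Icc a b := ⟨le_rfl, hab.le⟩
  have hM0 : 0 ≤ M := le_trans (abs_nonneg (B₁' a)) ((hM₁ a haIcc).trans (le_max_left _ _))
  have hMb₁ : ∀ t ∈ Icc a b, |B₁' t| ≤ M := fun t ht => (hM₁ t ht).trans (le_max_left _ _)
  have hMb₂ : ∀ t ∈ Icc a b, |B₂' t| ≤ M := fun t ht => (hM₂ t ht).trans (le_max_right _ _)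
  -- null sets and a.e. membership in the good set
  have hnull : ∀ s : Finset ℝ, volume (s : Set ℝ) = 0 :=
    fun s => s.finite_toSet.measure_zero _
  have hgoodae : ∀ᵐ t ∂ν, t ∈ Ioo a b ∧ t ∉ (E : Set ℝ) := by
    have h1 : ν (E : Set ℝ) = 0 :=
      le_antisymm ((Measure.restrict_apply_le _ _).trans (hnull E).le) zero_le
    filter_upwards [ae_restrict_mem measurableSet_Ioo, measure_eq_zero_iff_ae_notMem.1 h1]
      with t h2 h3
    exact ⟨h2, h3⟩
  -- measurability
  have haem : ∀ (f : ℝ → ℝ) (s : Finset ℝ), ContinuousOn f (Icc a b \ (s : Set ℝ)) →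
      AEMeasurable f ν := by
    intro f s hf
    have h1 : AEMeasurable f (volume.restrict (Icc a b \ (s : Set ℝ))) :=
      hf.aemeasurable (measurableSet_Icc.diff s.finite_toSet.measurableSet)
    have h2 : AEMeasurable f (volume.restrict (Ioo a b \ (s : Set ℝ))) :=
      h1.mono_measure (Measure.restrict_mono (diff_subset_diff_left Ioo_subset_Icc_self) le_rfl)
    rwa [Measure.restrict_congr_set
      (diff_ae_eq_self.2 (measure_mono_null inter_subset_right (hnull s)))] at h2
  have haem₁ : AEMeasurable B₁' ν := haem _ _ hc₁
  have haem₂ : AEMeasurable B₂' ν := haem _ _ hc₂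
  -- integrability helpers
  have hIntAE : ∀ (f : ℝ → ℝ) (C : ℝ), AEMeasurable f ν → (∀ᵐ t ∂ν, |f t| ≤ C) →
      Integrable f ν := by
    intro f C hmf hbf
    refine ⟨hmf.aestronglyMeasurable, HasFiniteIntegral.of_bounded (C := C) ?_⟩
    filter_upwards [hbf] with t ht
    rwa [Real.norm_eq_abs]
  have hIccInt : ∀ (f : ℝ → ℝ) (C : ℝ), AEMeasurable f ν → (∀ t ∈ Icc a b, |f t| ≤ C) →
      IntegrableOn f (Icc a b) volume := by
    intro f C hmf hbf
    have : IntegrableOn f (Ioo a b) volume := by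
      refine hIntAE f C hmf ?_
      filter_upwards [ae_restrict_mem measurableSet_Ioo] with t ht
      exact hbf t (Ioo_subset_Icc_self ht)
    unfold IntegrableOn at this ⊢
    rwa [← Measure.restrict_congr_set Ioo_ae_eq_Icc]
  have intInt₁ : IntegrableOn B₁' (Icc a b) volume := hIccInt B₁' M haem₁ hMb₁
  have intInt₂ : IntegrableOn B₂' (Icc a b) volume := hIccInt B₂' M haem₂ hMb₂
  -- the gap function D
  set D : ℝ → ℝ := fun t => B₂ t - B₁ t with hD
  set D' : ℝ → ℝ := fun t => B₂' t - B₁' t with hD'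
  have hDcont : ContinuousOn D (Icc a b) := hB₂c.sub hB₁c
  have hDb : D b = 0 := by simp only [hD]; rw [h_end]; ring
  have hDa : D a = 0 := by simp only [hD]; rw [h_start]; ring
  have hD0 : ∀ c ∈ Icc a b, D c ≤ 0 := by
    intro c hc
    rcases eq_or_lt_of_le hc.1 with rfl | h1
    · exact hDa.le
    rcases eq_or_lt_of_le hc.2 with rfl | h2
    · exact hDb.le
    have := h_gt c ⟨h1, h2⟩
    simp only [hD]
    linarith
  have hD'bnd : ∀ t ∈ Icc a b, |D' t| ≤ 2 * M := by
    intro t ht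
    have h1 := abs_le.1 (hMb₁ t ht)
    have h2 := abs_le.1 (hMb₂ t ht)
    simp only [hD']
    rw [abs_le]
    constructor <;> linarith
  have hD'int : IntegrableOn D' (Icc a b) volume := by
    have := intInt₂.sub intInt₁
    exact this
  have hD'ii : ∀ u v : ℝ, u ∈ Icc a b → v ∈ Icc a b → IntervalIntegrable D' volume u v :=
    fun u v hu hv => (hD'int.mono_set (uIcc_subset_Icc hu hv)).intervalIntegrable
  have hftcD : ∀ c ∈ Icc a b, (∫ t in c..b, D' t) = D b - D c := by
    intro c hc
    refine ftc_finite E c b D D' hc.2 (hDcont.mono (Icc_subset_Icc hc.1 le_rfl)) ?_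
      (hD'ii c b hc ⟨hab.le, le_rfl⟩)
    intro t ht htE
    have htIoo : t ∈ Ioo a b := ⟨lt_of_le_of_lt hc.1 ht.1, ht.2⟩
    exact (hgood₂ t htIoo htE).sub (hgood₁ t htIoo htE)
  -- Lipschitz-type bound on the right slope of B₁
  have hB₁ii : ∀ u v : ℝ, u ∈ Icc a b → v ∈ Icc a b → IntervalIntegrable B₁' volume u v :=
    fun u v hu hv => (intInt₁.mono_set (uIcc_subset_Icc hu hv)).intervalIntegrable
  have hσle : ∀ t ∈ Ico a b, rslope B₁ b t ≤ M := by
    intro t ht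
    have hftc1 : (∫ u in t..b, B₁' u) = B₁ b - B₁ t := by
      refine ftc_finite s₁ t b B₁ B₁' ht.2.le (hB₁c.mono (Icc_subset_Icc ht.1 le_rfl)) ?_
        (hB₁ii t b ⟨ht.1, ht.2.le⟩ ⟨hab.le, le_rfl⟩)
      intro u hu hus
      exact hd₁ u ⟨lt_of_le_of_lt ht.1 hu.1, hu.2⟩ hus
    have hbnd : ‖∫ u in t..b, B₁' u‖ ≤ M * |b - t| := by
      refine intervalIntegral.norm_integral_le_of_norm_le_const ?_
      intro x hx
      rw [Set.uIoc_of_le ht.2.le] at hx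
      rw [Real.norm_eq_abs]
      exact hMb₁ x ⟨ht.1.trans hx.1.le, hx.2⟩
    have hlip : B₁ b - B₁ t ≤ M * (b - t) := by
      rw [hftc1] at hbnd
      rw [Real.norm_eq_abs, abs_of_nonneg (by linarith [ht.2] : (0:ℝ) ≤ b - t)] at hbnd
      exact (le_abs_self _).trans hbnd
    have h1 : rslope B₁ b t ≤ (B₁ b - B₁ t) / (b - t) :=
      rslope_le hB₁_mono ht ⟨ht.2, le_rfl⟩
    refine h1.trans ?_
    rw [div_le_iff₀ (by linarith [ht.2] : (0:ℝ) < b - t)]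
    linarith
  -- the monotone weight w
  set w : ℝ → ℝ := fun t => subslope φ (rslope B₁ b t) with hw
  set K : ℝ := subslope φ M + 1 with hK
  have hKpos : 0 < K := by
    have := subslope_nonneg hφm hM0
    rw [hK]; linarith
  have hwmono : MonotoneOn w (Ioo a b) := by
    intro t ht u hu htu
    exact subslope_mono hφm hφc (rslope_nonneg hB₁_mono ⟨ht.1.le, ht.2⟩)
      (rslope_monotoneOn hB₁_mono hB₁_convex ⟨ht.1.le, ht.2⟩ ⟨hu.1.le, hu.2⟩ htu)
  have hwrange : ∀ t ∈ Ioo a b, w t ∈ Icc 0 K := by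
    intro t ht
    have h0 : 0 ≤ rslope B₁ b t := rslope_nonneg hB₁_mono ⟨ht.1.le, ht.2⟩
    constructor
    · exact subslope_nonneg hφm h0
    · have := subslope_mono hφm hφc h0 (hσle t ⟨ht.1.le, ht.2⟩)
      rw [hK]; linarith
  have hwaem : AEMeasurable w ν :=
    aemeasurable_restrict_of_monotoneOn measurableSet_Ioo hwmono
  have hIw : Integrable w ν := by
    refine hIntAE w K hwaem ?_
    filter_upwards [ae_restrict_mem measurableSet_Ioo] with t ht
    have := hwrange t ht
    rw [abs_of_nonneg this.1]
    exact this.2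
  have hD'aem : AEMeasurable D' ν := haem₂.sub haem₁
  have hID' : Integrable D' ν := by
    refine hIntAE D' (2 * M) hD'aem ?_
    filter_upwards [ae_restrict_mem measurableSet_Ioo] with t ht
    exact hD'bnd t (Ioo_subset_Icc_self ht)
  have hIwD' : Integrable (fun t => w t * D' t) ν := by
    refine hIntAE _ (K * (2 * M)) (hwaem.mul hD'aem) ?_
    filter_upwards [ae_restrict_mem measurableSet_Ioo] with t ht
    rw [abs_mul]
    have h1 := hwrange t ht
    have h2 := hD'bnd t (Ioo_subset_Icc_self ht)
    refine mul_le_mul ?_ h2 (abs_nonneg _) hKpos.le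
    rw [abs_of_nonneg h1.1]
    exact h1.2
  -- Part A: the weighted integral is nonnegative
  have hPartA : 0 ≤ ∫ t, w t * D' t ∂ν := by
    rw [hν]
    refine weight_integral_nonneg a b hab w D' D K (2 * M) hKpos (by linarith)
      hwmono hwrange hD'bnd ?_ ?_ hftcD hD0 hDb
    · rwa [hν] at hID'
    · rwa [hν] at hIwD'
  -- φ-composites
  have haemφ : ∀ (g g' : ℝ → ℝ) (s : Finset ℝ), ContinuousOn g' (Icc a b \ (s : Set ℝ)) →
      (s : Set ℝ) ⊆ (E : Set ℝ) →
      (∀ t, t ∈ Ioo a b → t ∉ (E : Set ℝ) → 0 ≤ g' t) →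
      AEMeasurable (fun t => φ (g' t)) ν := by
    intro g g' s hcg hsE hpos
    have hsub : Ioo a b \ (E : Set ℝ) ⊆ Icc a b \ (s : Set ℝ) :=
      diff_subset_diff Ioo_subset_Icc_self hsE
    have hcont : ContinuousOn (fun t => φ (g' t)) (Ioo a b \ (E : Set ℝ)) :=
      hφ_cont.comp (hcg.mono hsub) (fun t ht => hpos t ht.1 ht.2)
    have h1 : AEMeasurable (fun t => φ (g' t))
        (volume.restrict (Ioo a b \ (E : Set ℝ))) :=
      hcont.aemeasurable (measurableSet_Ioo.diff E.finite_toSet.measurableSet)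
    rwa [Measure.restrict_congr_set
      (diff_ae_eq_self.2 (measure_mono_null inter_subset_right (hnull E)))] at h1
  have haemφ₁ : AEMeasurable (fun t => φ (B₁' t)) ν := by
    refine haemφ B₁ B₁' s₁ hc₁ ?_ hx0
    simp only [hE, Finset.coe_union]
    exact subset_union_left
  have haemφ₂ : AEMeasurable (fun t => φ (B₂' t)) ν := by
    refine haemφ B₂ B₂' s₂ hc₂ ?_ hy0
    simp only [hE, Finset.coe_union]
    exact subset_union_right
  have hφMnn : 0 ≤ φ M := by
    have := hφm (mem_Ici.2 le_rfl) (mem_Ici.2 hM0) hM0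
    rwa [hφ0] at this
  have hφbound : ∀ (g' : ℝ → ℝ), (∀ t ∈ Icc a b, |g' t| ≤ M) →
      (∀ t, t ∈ Ioo a b → t ∉ (E : Set ℝ) → 0 ≤ g' t) →
      ∀ᵐ t ∂ν, |φ (g' t)| ≤ φ M := by
    intro g' hb hpos
    filter_upwards [hgoodae] with t ht
    have h0 : 0 ≤ g' t := hpos t ht.1 ht.2
    have hle : g' t ≤ M := (abs_le.1 (hb t (Ioo_subset_Icc_self ht.1))).2
    have hlow : φ 0 ≤ φ (g' t) := hφm (mem_Ici.2 le_rfl) (mem_Ici.2 h0) h0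
    have hup : φ (g' t) ≤ φ M := hφm (mem_Ici.2 h0) (mem_Ici.2 hM0) hle
    rw [hφ0] at hlow
    rw [abs_le]
    constructor <;> linarith
  have hIφ₁ : Integrable (fun t => φ (B₁' t)) ν :=
    hIntAE _ (φ M) haemφ₁ (hφbound B₁' hMb₁ hx0)
  have hIφ₂ : Integrable (fun t => φ (B₂' t)) ν :=
    hIntAE _ (φ M) haemφ₂ (hφbound B₂' hMb₂ hy0)
  -- the Jensen-gap integrand F
  set F : ℝ → ℝ := fun t => φ (B₂' t) - φ (B₁' t) - w t * D' t with hF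
  have hIF : Integrable F ν := (hIφ₂.sub hIφ₁).sub hIwD'
  have hFpos : ∀ t, t ∈ Ioo a b → t ∉ (E : Set ℝ) → B₂' t ≠ B₁' t → 0 < F t := by
    intro t ht htE hne
    have hx := hx0 t ht htE
    have hy := hy0 t ht htE
    have hwt : w t = subslope φ (B₁' t) := by simp only [hw]; rw [hσ t ht htE]
    have := subslope_support hφm hφ_convex hx hy hne
    simp only [hF, hD', hwt]
    linarith
  have hF0 : ∀ᵐ t ∂ν, 0 ≤ F t := by
    filter_upwards [hgoodae] with t ht
    by_cases hne : B₂' t = B₁' t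
    · have hwt : w t = subslope φ (B₁' t) := by simp only [hw]; rw [hσ t ht.1 ht.2]
      simp only [hF, hD', hne]
      ring_nf
      exact le_rfl
    · exact (hFpos t ht.1 ht.2 hne).le
  -- Part B: the Jensen gap is strictly positive
  have hPartB : 0 < ∫ t, F t ∂ν := by
    rw [integral_pos_iff_support_of_nonneg_ae hF0 hIF]
    set S : Set ℝ := {t | (t ∈ Ioo a b ∧ t ∉ (E : Set ℝ)) ∧ B₂' t ≠ B₁' t} with hS
    have hSsub : S ⊆ Function.support F := by
      rintro t ⟨⟨ht, htE⟩, hne⟩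
      exact ne_of_gt (hFpos t ht htE hne)
    have hSne : ν S ≠ 0 := by
      intro hS0
      -- then D' vanishes a.e. and D is constant, contradicting h_gt
      have hD'0 : ∀ᵐ t ∂ν, D' t = 0 := by
        rw [ae_iff]
        set T : Set ℝ := {t | ¬(t ∈ Ioo a b ∧ t ∉ (E : Set ℝ))} with hT
        have hsubT : {t | ¬D' t = 0} ⊆ S ∪ T := by
          intro t ht
          simp only [Set.mem_setOf_eq] at ht
          by_cases hgood : t ∈ Ioo a b ∧ t ∉ (E : Set ℝ)
          · left
            refine ⟨hgood, ?_⟩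
            intro heq
            apply ht
            simp only [hD', heq]
            ring
          · right
            exact hgood
        have hTnull : ν T = 0 := ae_iff.1 hgoodae
        refine measure_mono_null hsubT (le_antisymm ((measure_union_le _ _).trans ?_)
          zero_le)
        rw [hS0, hTnull]
        simp
      set m : ℝ := (a + b) / 2 with hm
      have hmIoo : m ∈ Ioo a b := ⟨by rw [hm]; linarith, by rw [hm]; linarith⟩
      have hint0 : (∫ t in a..m, D' t) = 0 := by
        rw [intervalIntegral.integral_of_le hmIoo.1.le]
        refine integral_eq_zero_of_ae ?_
        have hsub : Ioc a m ⊆ Ioo a b := fun t ht => ⟨ht.1, lt_of_le_of_lt ht.2 hmIoo.2⟩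
        exact ae_restrict_of_ae_restrict_of_subset hsub (by rwa [← hν])
      have hftcm : (∫ t in a..m, D' t) = D m - D a := by
        refine ftc_finite E a m D D' hmIoo.1.le
          (hDcont.mono (Icc_subset_Icc le_rfl hmIoo.2.le)) ?_
          (hD'ii a m haIcc ⟨hmIoo.1.le, hmIoo.2.le⟩)
        intro t ht htE
        have htIoo : t ∈ Ioo a b := ⟨ht.1, ht.2.trans hmIoo.2⟩
        exact (hgood₂ t htIoo htE).sub (hgood₁ t htIoo htE)
      have hDm : D m = 0 := by
        rw [hint0] at hftcm
        rw [hDa] at hftcm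
        linarith
      have := h_gt m hmIoo
      simp only [hD] at hDm
      linarith
    calc (0 : ENNReal) < ν S := pos_iff_ne_zero.2 hSne
      _ ≤ ν (Function.support F) := measure_mono hSsub
  -- assemble
  have hconv : ∀ f : ℝ → ℝ, (∫ t in a..b, f t) = ∫ t, f t ∂ν := by
    intro f
    rw [intervalIntegral.integral_of_le hab.le, hν,
      Measure.restrict_congr_set Ioo_ae_eq_Ioc]
  have hsplit : (∫ t, φ (B₂' t) ∂ν) - (∫ t, φ (B₁' t) ∂ν)
      = (∫ t, F t ∂ν) + ∫ t, w t * D' t ∂ν := by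
    rw [← integral_sub hIφ₂ hIφ₁, ← integral_add hIF hIwD']
    refine integral_congr_ae (Eventually.of_forall (fun t => ?_))
    simp only [hF, hD']
    ring
  rw [hconv (fun t => φ (B₁' t)), hconv (fun t => φ (B₂' t))]
  linarith [hPartA, hPartB, hsplit.le, hsplit.ge]
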